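/- There is an absolute constant A > 0 such that the following holds (part 2 of the Estimator Lemma). Let N ≥ 1, let u ∈ ℝ^N, let τ > 0 and ζ ∈ (0,1], and let X > 0 be a real with X ≥ ‖u‖₂. Let μ ∈ (0,1) and let T₁ be an integer with T₁ ≥ A·N·τ²·log(2/μ)/(ζ²·X²). If J : {1,…,T₁} → {0,…,N−1} is a uniformly random function and Θ(J) = (N/T₁)·Σ_{i=1}^{T₁} min(|u[J(i)]|, τ)², then with probability at least 1 − μ one has Θ(J) ≤ (1+ζ)·X². -/

import Mathlib

set_option maxHeartbeats 1000000 in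
open Classical in
/-- Part 2 of the Estimator Lemma: the truncated sampled estimator does not
overestimate `X² ≥ ‖u‖₂²` by more than a `(1+ζ)` factor, with probability at
least `1 - μ`. -/
theorem stmt_4 :
    ∃ A : ℝ, 0 < A ∧
      ∀ N : ℕ, 1 ≤ N → ∀ u : Fin N → ℝ, ∀ τ : ℝ, 0 < τ →
      ∀ ζ : ℝ, 0 < ζ → ζ ≤ 1 →
      ∀ X : ℝ, 0 < X → Real.sqrt (∑ i, u i ^ 2) ≤ X →
      ∀ μ : ℝ, 0 < μ → μ < 1 →
      ∀ T1 : ℕ, A * N * τ ^ 2 * Real.log (2 / μ) / (ζ ^ 2 * X ^ 2) ≤ T1 →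
      (1 - μ) * (Fintype.card (Fin T1 → Fin N) : ℝ) ≤
        ((Finset.univ.filter (fun J : Fin T1 → Fin N =>
          (N : ℝ) / (T1 : ℝ) * ∑ i : Fin T1, (min |u (J i)| τ) ^ 2 ≤ (1 + ζ) * X ^ 2)).card : ℝ) := by
  refine ⟨9, by norm_num, ?_⟩
  intro N hN u τ hτ ζ hζ hζ1 X hX hXu μ hμ hμ1 T1 hT1
  classical
  set Y : Fin N → ℝ := fun j => (min |u j| τ) ^ 2 with hYdef
  have hτ2 : (0:ℝ) < τ ^ 2 := by positivity
  have hNpos : (0:ℝ) < N := by exact_mod_cast hN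
  have hY0 : ∀ j, 0 ≤ Y j := fun j => sq_nonneg _
  have hYb : ∀ j, Y j ≤ τ ^ 2 := by
    intro j
    have h1 : min |u j| τ ≤ τ := min_le_right _ _
    have h2 : 0 ≤ min |u j| τ := le_min (abs_nonneg _) hτ.le
    simp only [hYdef]
    nlinarith
  have hsumY : ∑ j, Y j ≤ X ^ 2 := by
    have h1 : ∀ j, Y j ≤ u j ^ 2 := by
      intro j
      have h2 : min |u j| τ ≤ |u j| := min_le_left _ _
      have h3 : 0 ≤ min |u j| τ := le_min (abs_nonneg _) hτ.le
      have h4 : |u j| ^ 2 = u j ^ 2 := sq_abs _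
      simp only [hYdef]
      nlinarith
    have h5 : 0 ≤ ∑ j, u j ^ 2 := Finset.sum_nonneg fun j _ => sq_nonneg _
    calc ∑ j, Y j ≤ ∑ j, u j ^ 2 := Finset.sum_le_sum fun j _ => h1 j
    _ ≤ X ^ 2 := by
      nlinarith [Real.sq_sqrt h5, Real.sqrt_nonneg (∑ j, u j ^ 2)]
  have hL : 0 < Real.log (2 / μ) := Real.log_pos (by rw [lt_div_iff₀ hμ]; linarith)
  have hT1pos : 0 < T1 := by
    by_contra h
    push_neg at h
    interval_cases T1
    have : (0:ℝ) < 9 * N * τ ^ 2 * Real.log (2 / μ) / (ζ ^ 2 * X ^ 2) := by positivity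
    simp only [Nat.cast_zero] at hT1
    linarith
  have hT1r : (0:ℝ) < T1 := by exact_mod_cast hT1pos
  set l : ℝ := ζ / (3 * τ ^ 2) with hl
  have hlpos : 0 < l := by positivity
  -- exp upper bound: exp(ζ/3) ≤ 1 + (1+ζ)*ζ/3 - ζ^2/9
  have hexpkey : Real.exp (ζ / 3) ≤ 1 + (1 + ζ) * (ζ / 3) - ζ ^ 2 / 9 := by
    have h1 : -(ζ/3) + 1 ≤ Real.exp (-(ζ/3)) := Real.add_one_le_exp _
    have h2 : Real.exp (ζ/3) * Real.exp (-(ζ/3)) = 1 := by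
      rw [← Real.exp_add]; simp
    have h3 : 0 < Real.exp (ζ/3) := Real.exp_pos _
    have h4 : Real.exp (ζ/3) * (1 - ζ/3) ≤ 1 := by nlinarith
    nlinarith
  have hexp1 : 1 ≤ Real.exp (ζ / 3) := Real.one_le_exp (by positivity)
  -- convexity bound per coordinate
  have hconv : ∀ j, Real.exp (l * Y j) ≤ 1 + (Real.exp (ζ/3) - 1) * (Y j / τ ^ 2) := by
    intro j
    set t := Y j / τ ^ 2 with ht
    have ht0 : 0 ≤ t := div_nonneg (hY0 j) hτ2.le
    have ht1 : t ≤ 1 := (div_le_one hτ2).2 (hYb j)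
    have h := convexOn_exp.2 (Set.mem_univ (0:ℝ)) (Set.mem_univ (ζ/3))
      (by linarith : (0:ℝ) ≤ 1 - t) ht0 (by ring)
    simp only [smul_eq_mul, mul_zero, Real.exp_zero, mul_one, zero_add] at h
    have harg : t * (ζ/3) = l * Y j := by
      rw [hl, ht]; field_simp
    rw [harg] at h
    linarith
  -- sum bound
  set c : ℝ := (Real.exp (ζ/3) - 1) * X ^ 2 / (N * τ ^ 2) with hc
  have hcpos : 0 ≤ c := by
    apply div_nonneg _ (by positivity)
    nlinarith
  have hS : ∑ j, Real.exp (l * Y j) ≤ N * Real.exp c := by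
    have h1 : ∑ j, Real.exp (l * Y j) ≤ ∑ j, (1 + (Real.exp (ζ/3) - 1) * (Y j / τ ^ 2)) :=
      Finset.sum_le_sum fun j _ => hconv j
    have h2 : ∑ j, (1 + (Real.exp (ζ/3) - 1) * (Y j / τ ^ 2))
        = N + (Real.exp (ζ/3) - 1) * (∑ j, Y j) / τ ^ 2 := by
      rw [Finset.sum_add_distrib]
      simp [Finset.mul_sum, Finset.sum_div, mul_div_assoc]
    have hNc : (N:ℝ) * c = (Real.exp (ζ/3) - 1) * X ^ 2 / τ ^ 2 := by
      rw [hc]; field_simp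
    have h3 : (Real.exp (ζ/3) - 1) * (∑ j, Y j) / τ ^ 2
        ≤ (Real.exp (ζ/3) - 1) * X ^ 2 / τ ^ 2 := by
      gcongr
    have h4 : (N:ℝ) * (1 + c) ≤ N * Real.exp c :=
      mul_le_mul_of_nonneg_left (by linarith [Real.add_one_le_exp c]) hNpos.le
    have h5 : (N:ℝ) + (N:ℝ) * c = (N:ℝ) * (1 + c) := by ring
    rw [← hNc] at h3
    linarith
  have hSnonneg : 0 ≤ ∑ j, Real.exp (l * Y j) :=
    Finset.sum_nonneg fun j _ => (Real.exp_pos _).le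
  -- Markov / Chernoff counting
  set a : ℝ := (1 + ζ) * X ^ 2 * T1 / N with ha
  set bad : Finset (Fin T1 → Fin N) := Finset.univ.filter (fun J =>
    ¬ ((N : ℝ) / (T1 : ℝ) * ∑ i : Fin T1, (min |u (J i)| τ) ^ 2 ≤ (1 + ζ) * X ^ 2)) with hbad
  have hbadlt : ∀ J ∈ bad, a < ∑ i : Fin T1, Y (J i) := by
    intro J hJ
    rw [hbad, Finset.mem_filter] at hJ
    have h := lt_of_not_ge hJ.2
    rw [ha]
    rw [div_lt_iff₀ hNpos, div_mul_eq_mul_div, lt_div_iff₀ hT1r] at *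
    nlinarith [h]
  have hmarkov : (bad.card : ℝ) * Real.exp (l * a)
      ≤ ∑ J : Fin T1 → Fin N, Real.exp (l * ∑ i : Fin T1, Y (J i)) := by
    calc (bad.card : ℝ) * Real.exp (l * a) = ∑ _J ∈ bad, Real.exp (l * a) := by
          rw [Finset.sum_const, nsmul_eq_mul]
    _ ≤ ∑ J ∈ bad, Real.exp (l * ∑ i : Fin T1, Y (J i)) := by
          apply Finset.sum_le_sum
          intro J hJ
          exact Real.exp_le_exp.2 (mul_le_mul_of_nonneg_left (hbadlt J hJ).le hlpos.le)
    _ ≤ ∑ J : Fin T1 → Fin N, Real.exp (l * ∑ i : Fin T1, Y (J i)) :=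
          Finset.sum_le_sum_of_subset_of_nonneg (Finset.filter_subset _ _)
            (fun _ _ _ => (Real.exp_pos _).le)
  have hprod : ∑ J : Fin T1 → Fin N, Real.exp (l * ∑ i : Fin T1, Y (J i))
      = (∑ j, Real.exp (l * Y j)) ^ T1 := by
    rw [Fintype.sum_pow (fun j => Real.exp (l * Y j)) T1]
    apply Finset.sum_congr rfl
    intro J _
    rw [Finset.mul_sum, Real.exp_sum]
  have hpow : (∑ j, Real.exp (l * Y j)) ^ T1 ≤ ((N:ℝ) * Real.exp c) ^ T1 :=
    pow_le_pow_left₀ hSnonneg hS T1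
  have hfinal : (bad.card : ℝ) ≤ μ * (N:ℝ) ^ T1 := by
    have h1 : (bad.card : ℝ) * Real.exp (l * a) ≤ (N:ℝ) ^ T1 * Real.exp (T1 * c) := by
      calc (bad.card : ℝ) * Real.exp (l * a)
          ≤ ((N:ℝ) * Real.exp c) ^ T1 := le_trans hmarkov (hprod ▸ hpow)
      _ = (N:ℝ) ^ T1 * Real.exp (T1 * c) := by
          rw [mul_pow, Real.exp_nat_mul]
    have h2 : (bad.card : ℝ) ≤ (N:ℝ) ^ T1 * Real.exp (T1 * c - l * a) := by
      have hea : 0 < Real.exp (l * a) := Real.exp_pos _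
      rw [Real.exp_sub, ← mul_div_assoc, le_div_iff₀ hea]
      exact h1
    have h3 : T1 * c - l * a ≤ Real.log μ := by
      set D : ℝ := T1 * X ^ 2 / (N * τ ^ 2) with hD
      have hDpos : 0 < D := by positivity
      have heq : T1 * c - l * a = D * (Real.exp (ζ/3) - 1 - (1 + ζ) * (ζ/3)) := by
        rw [hc, hl, ha, hD]; field_simp
      have h4 : Real.exp (ζ/3) - 1 - (1 + ζ) * (ζ/3) ≤ -(ζ ^ 2 / 9) := by linarith
      have h5 : T1 * c - l * a ≤ -(D * (ζ ^ 2 / 9)) := by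
        rw [heq]
        nlinarith
      have h6 : Real.log (2 / μ) ≤ D * (ζ ^ 2 / 9) := by
        rw [hD]
        rw [div_le_iff₀ (by positivity : (0:ℝ) < ζ ^ 2 * X ^ 2)] at hT1
        rw [div_mul_eq_mul_div, le_div_iff₀ (by positivity : (0:ℝ) < N * τ ^ 2)]
        nlinarith
      have h7 : -Real.log μ ≤ Real.log (2 / μ) := by
        rw [Real.log_div (by norm_num) hμ.ne']
        have : 0 < Real.log 2 := Real.log_pos (by norm_num)
        linarith
      linarith
    calc (bad.card : ℝ) ≤ (N:ℝ) ^ T1 * Real.exp (T1 * c - l * a) := h2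
    _ ≤ (N:ℝ) ^ T1 * Real.exp (Real.log μ) :=
        mul_le_mul_of_nonneg_left (Real.exp_le_exp.2 h3) (by positivity)
    _ = μ * (N:ℝ) ^ T1 := by rw [Real.exp_log hμ]; ring
  -- conclude
  have hcard : (Finset.univ.filter (fun J : Fin T1 → Fin N =>
      (N : ℝ) / (T1 : ℝ) * ∑ i : Fin T1, (min |u (J i)| τ) ^ 2 ≤ (1 + ζ) * X ^ 2)).card
      + bad.card = Fintype.card (Fin T1 → Fin N) := by
    rw [hbad]
    exact Finset.card_filter_add_card_filter_not _
  have hcardr : ((Finset.univ.filter (fun J : Fin T1 → Fin N =>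
      (N : ℝ) / (T1 : ℝ) * ∑ i : Fin T1, (min |u (J i)| τ) ^ 2 ≤ (1 + ζ) * X ^ 2)).card : ℝ)
      = (Fintype.card (Fin T1 → Fin N) : ℝ) - bad.card := by
    have := hcard
    push_cast [← this]
    ring
  have hcc : (Fintype.card (Fin T1 → Fin N) : ℝ) = (N:ℝ) ^ T1 := by
    rw [Fintype.card_fun]
    push_cast
    simp
  rw [hcardr, hcc]
  nlinarith [hfinal]
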